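/- For every integer m ≥ 0 and every element w of 𝔥y, one has (σ_m − τσ_mτ)(xw) = x·(σ_m − α̃σ_mα̃)(w); that is, the operator identity (σ_m − τσ_mτ)L_x = L_x(σ_m − α̃σ_mα̃) holds on 𝔥y. (This identity is the content of the equivalence between the derivation relations and the Ohno type relations.) -/

import Mathlib

noncomputable section

namespace FMZVNote

/-- The noncommutative polynomial ring `𝔥 = ℚ⟨x,y⟩` in two indeterminates `x`, `y`. -/
abbrev H : Type := FreeAlgebra ℚ (Fin 2)

/-- The generator `x`. -/
def x : H := FreeAlgebra.ι ℚ 0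

/-- The generator `y`. -/
def y : H := FreeAlgebra.ι ℚ 1

/-- `z = x + y`. -/
def z : H := x + y

/-- `z_k = x^{k-1} y`. -/
def zk (k : ℕ) : H := x ^ (k - 1) * y

/-- The word `z_{k_1} ⋯ z_{k_r}` associated to an index `(k_1, …, k_r)`. -/
def zword (ks : List ℕ) : H := (ks.map zk).prod

/-- The index `(k_1+e_1, …, k_r+e_r)`. -/
def addE (k : List ℕ) (e : Fin k.length → ℕ) : List ℕ :=
  List.ofFn fun i => k.get i + e i

/-- The automorphism `α` of `𝔥` interchanging `x` and `y`. -/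
def alphaHom : H →ₐ[ℚ] H := FreeAlgebra.lift ℚ ![y, x]

/-! ### Auxiliary power-series model of the map `σ` -/

/-- A concrete model of the automorphism `σ` as a map into power series over `𝔥`:
`x ↦ x`, `y ↦ (1-x)⁻¹ y`, with the grading variable the power series variable. -/
def Shat : H →ₐ[ℚ] PowerSeries H :=
  FreeAlgebra.lift ℚ ![PowerSeries.C (R := H) x, PowerSeries.mk fun j => x ^ j * y]

/-- A concrete model of `τστ`: `x ↦ x(1-y)⁻¹`, `y ↦ y`. -/
def Ghat : H →ₐ[ℚ] PowerSeries H :=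
  FreeAlgebra.lift ℚ ![PowerSeries.mk fun j => x * y ^ j, PowerSeries.C (R := H) y]

/-- A concrete model of `ασα`: `x ↦ (1-y)⁻¹x`, `y ↦ y`. -/
def Bhat : H →ₐ[ℚ] PowerSeries H :=
  FreeAlgebra.lift ℚ ![PowerSeries.mk fun j => y ^ j * x, PowerSeries.C (R := H) y]

/-- The power series `(1-y)⁻¹ = ∑ y^j t^j`. -/
def Yd : PowerSeries H := PowerSeries.mk fun j => y ^ j

lemma Shat_x : Shat x = PowerSeries.C (R := H) x := by
  simp [Shat, x, FreeAlgebra.lift_ι_apply]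
lemma Shat_y : Shat y = PowerSeries.mk fun j => x ^ j * y := by
  simp [Shat, y, FreeAlgebra.lift_ι_apply]
lemma alphaHom_x : alphaHom x = y := by
  simp [alphaHom, x, FreeAlgebra.lift_ι_apply]
lemma alphaHom_y : alphaHom y = x := by
  simp [alphaHom, y, FreeAlgebra.lift_ι_apply]

lemma C_x_mul_Yd : PowerSeries.C (R := H) x * Yd = PowerSeries.mk fun j => x * y ^ j := by
  ext n
  simp [Yd, PowerSeries.coeff_C_mul, PowerSeries.coeff_mk]
lemma Yd_mul_C_x : Yd * PowerSeries.C (R := H) x = PowerSeries.mk fun j => y ^ j * x := by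
  ext n
  simp [Yd, PowerSeries.coeff_mul_C, PowerSeries.coeff_mk]
lemma Yd_comm_C_y : Yd * PowerSeries.C (R := H) y = PowerSeries.C (R := H) y * Yd := by
  ext n
  simp only [Yd, PowerSeries.coeff_mul_C, PowerSeries.coeff_C_mul, PowerSeries.coeff_mk]
  rw [← pow_succ, pow_succ']

lemma Ghat_x : Ghat x = PowerSeries.C (R := H) x * Yd := by
  rw [C_x_mul_Yd]; simp [Ghat, x, FreeAlgebra.lift_ι_apply]
lemma Ghat_y : Ghat y = PowerSeries.C (R := H) y := by
  simp [Ghat, y, FreeAlgebra.lift_ι_apply]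
lemma Bhat_x : Bhat x = Yd * PowerSeries.C (R := H) x := by
  rw [Yd_mul_C_x]; simp [Bhat, x, FreeAlgebra.lift_ι_apply]
lemma Bhat_y : Bhat y = PowerSeries.C (R := H) y := by
  simp [Bhat, y, FreeAlgebra.lift_ι_apply]

/-- The key identity `(1-y)⁻¹ · (τστ)(v) = (ασα)(v) · (1-y)⁻¹`. -/
lemma Yd_mul_Ghat (v : H) : Yd * Ghat v = Bhat v * Yd := by
  induction v using FreeAlgebra.induction with
  | grade0 r =>
      rw [AlgHom.commutes, AlgHom.commutes]
      exact (Algebra.commutes r Yd).symm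
  | grade1 i =>
      fin_cases i
      · show Yd * Ghat x = Bhat x * Yd
        rw [Ghat_x, Bhat_x, mul_assoc]
      · show Yd * Ghat y = Bhat y * Yd
        rw [Ghat_y, Bhat_y, Yd_comm_C_y]
  | mul a b ha hb =>
      rw [map_mul, map_mul, ← mul_assoc, ha, mul_assoc, hb, ← mul_assoc]
  | add a b ha hb =>
      rw [map_add, map_add, mul_add, add_mul, ha, hb]

/-- Transport of coefficients of `Shat` through `α`: `α(σ_n(α v)) = (ασα)_n(v)`. -/
lemma alpha_coeff (v : H) :
    ∀ n, alphaHom (PowerSeries.coeff (R := H) n (Shat (alphaHom v))) = PowerSeries.coeff (R := H) n (Bhat v) := by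
  induction v using FreeAlgebra.induction with
  | grade0 r =>
      intro n
      rw [AlgHom.commutes, AlgHom.commutes, AlgHom.commutes, PowerSeries.algebraMap_apply,
        PowerSeries.coeff_C]
      split_ifs
      · exact AlgHom.commutes _ _
      · exact map_zero _
  | grade1 i =>
      fin_cases i
      · show ∀ n, alphaHom (PowerSeries.coeff (R := H) n (Shat (alphaHom x)))
            = PowerSeries.coeff (R := H) n (Bhat x)
        intro n
        rw [alphaHom_x, Shat_y, PowerSeries.coeff_mk, Bhat_x, Yd_mul_C_x, PowerSeries.coeff_mk,
          map_mul, map_pow, alphaHom_x, alphaHom_y]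
      · show ∀ n, alphaHom (PowerSeries.coeff (R := H) n (Shat (alphaHom y)))
            = PowerSeries.coeff (R := H) n (Bhat y)
        intro n
        rw [alphaHom_y, Shat_x, Bhat_y, PowerSeries.coeff_C, PowerSeries.coeff_C]
        split_ifs
        · exact alphaHom_x
        · exact map_zero _
  | mul a b ha hb =>
      intro n
      simp only [map_mul, PowerSeries.coeff_mul, map_sum]
      exact Finset.sum_congr rfl fun p _ => by rw [ha, hb]
  | add a b ha hb =>
      intro n
      simp only [map_add, PowerSeries.coeff_mul, map_sum, ha, hb]

/-- Transport of coefficients of `Shat` through `τ`: `τ(σ_n(τ v)) = (τστ)_n(v)`. -/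
lemma tau_coeff (tau : H →ₗ[ℚ] H) (htauone : tau 1 = 1)
    (htaumul : ∀ a b : H, tau (a * b) = tau b * tau a)
    (htaux : tau x = y) (htauy : tau y = x) (v : H) :
    ∀ n, tau (PowerSeries.coeff (R := H) n (Shat (tau v))) = PowerSeries.coeff (R := H) n (Ghat v) := by
  have htau_alg : ∀ r : ℚ, tau (algebraMap ℚ H r) = algebraMap ℚ H r := by
    intro r
    rw [Algebra.algebraMap_eq_smul_one, map_smul, htauone]
  have htau_xpow : ∀ n : ℕ, tau (x ^ n) = y ^ n := by
    intro n
    induction n with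
    | zero => simpa using htauone
    | succ n ih => rw [pow_succ, htaumul, htaux, ih, ← pow_succ']
  induction v using FreeAlgebra.induction with
  | grade0 r =>
      intro n
      rw [htau_alg, AlgHom.commutes, AlgHom.commutes, PowerSeries.algebraMap_apply,
        PowerSeries.coeff_C]
      split_ifs
      · exact htau_alg r
      · exact map_zero _
  | grade1 i =>
      fin_cases i
      · show ∀ n, tau (PowerSeries.coeff (R := H) n (Shat (tau x))) = PowerSeries.coeff (R := H) n (Ghat x)
        intro n
        rw [htaux, Shat_y, PowerSeries.coeff_mk, Ghat_x, C_x_mul_Yd, PowerSeries.coeff_mk,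
          htaumul, htauy, htau_xpow]
      · show ∀ n, tau (PowerSeries.coeff (R := H) n (Shat (tau y))) = PowerSeries.coeff (R := H) n (Ghat y)
        intro n
        rw [htauy, Shat_x, Ghat_y, PowerSeries.coeff_C, PowerSeries.coeff_C]
        split_ifs
        · exact htaux
        · exact map_zero _
  | mul a b ha hb =>
      intro n
      calc tau (PowerSeries.coeff (R := H) n (Shat (tau (a * b))))
          = tau (∑ p ∈ Finset.HasAntidiagonal.antidiagonal n,
              PowerSeries.coeff (R := H) p.1 (Shat (tau b)) * PowerSeries.coeff (R := H) p.2 (Shat (tau a))) := by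
            rw [htaumul, map_mul, PowerSeries.coeff_mul]
        _ = ∑ p ∈ Finset.HasAntidiagonal.antidiagonal n,
              (PowerSeries.coeff (R := H) p.1 (Ghat a)) * (PowerSeries.coeff (R := H) p.2 (Ghat b)) := by
            rw [map_sum]
            rw [show (∑ p ∈ Finset.HasAntidiagonal.antidiagonal n,
                tau (PowerSeries.coeff (R := H) p.1 (Shat (tau b)) * PowerSeries.coeff (R := H) p.2 (Shat (tau a))))
              = ∑ p ∈ Finset.HasAntidiagonal.antidiagonal n,
                (fun q : ℕ × ℕ => (PowerSeries.coeff (R := H) q.1 (Ghat a))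
                  * (PowerSeries.coeff (R := H) q.2 (Ghat b))) p.swap from
              Finset.sum_congr rfl fun p _ => by
                simp only [Prod.fst_swap, Prod.snd_swap]
                rw [htaumul, ha, hb]]
            exact Finset.Nat.sum_antidiagonal_swap
              (f := fun q : ℕ × ℕ => (PowerSeries.coeff (R := H) q.1 (Ghat a))
                * (PowerSeries.coeff (R := H) q.2 (Ghat b)))
        _ = PowerSeries.coeff (R := H) n (Ghat (a * b)) := by rw [map_mul, PowerSeries.coeff_mul]
  | add a b ha hb =>
      intro n
      have h1 : tau (a + b) = tau a + tau b := map_add tau a b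
      simp only [h1, map_add, ha, hb]

/-! ### `Shat` agrees with `sigmaM` on words ending in `y` -/

lemma sum_antidiagonalTuple_succ {M : Type*} [AddCommMonoid M] (n m : ℕ)
    (f : (Fin (n + 1) → ℕ) → M) :
    ∑ e ∈ Finset.Nat.antidiagonalTuple (n + 1) m, f e
      = ∑ p ∈ Finset.HasAntidiagonal.antidiagonal m, ∑ e ∈ Finset.Nat.antidiagonalTuple n p.2,
          f (Fin.cons p.1 e) := by
  rw [Finset.sum_sigma']
  refine Finset.sum_nbij' (i := fun e => ⟨(e 0, ∑ i, e (Fin.succ i)), fun i => e (Fin.succ i)⟩)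
    (j := fun q => Fin.cons q.1.1 q.2) ?_ ?_ ?_ ?_ ?_
  · intro e he
    rw [Finset.Nat.mem_antidiagonalTuple, Fin.sum_univ_succ] at he
    rw [Finset.mem_sigma]
    refine ⟨Finset.HasAntidiagonal.mem_antidiagonal.mpr he, Finset.Nat.mem_antidiagonalTuple.mpr rfl⟩
  · intro q hq
    rw [Finset.mem_sigma] at hq
    rw [Finset.Nat.mem_antidiagonalTuple, Fin.sum_cons,
      Finset.Nat.mem_antidiagonalTuple.mp hq.2]
    exact Finset.HasAntidiagonal.mem_antidiagonal.mp hq.1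
  · intro e _
    exact Fin.cons_self_tail e
  · intro q hq
    rw [Finset.mem_sigma] at hq
    have h2 := Finset.Nat.mem_antidiagonalTuple.mp hq.2
    refine Sigma.ext ?_ (by simp [Fin.cons_succ, HEq])
    · simp [Fin.cons_zero, Fin.cons_succ, h2]
  · intro e _
    exact (congrArg f (Fin.cons_self_tail e)).symm

lemma zword_cons (k : ℕ) (t : List ℕ) : zword (k :: t) = zk k * zword t := by
  simp [zword]

lemma addE_cons (k : ℕ) (t : List ℕ) (a : ℕ) (f : Fin t.length → ℕ) :
    addE (k :: t) (Fin.cons a f) = (k + a) :: addE t f := by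
  simp [addE, List.ofFn_succ, Fin.cons_zero, Fin.cons_succ]

lemma coeff_Shat_zk (k : ℕ) (hk : 1 ≤ k) (n : ℕ) :
    PowerSeries.coeff (R := H) n (Shat (zk k)) = zk (k + n) := by
  have : Shat (zk k) = PowerSeries.C (R := H) (x ^ (k - 1)) * PowerSeries.mk fun j => x ^ j * y := by
    rw [zk, map_mul, map_pow, Shat_x, Shat_y, ← map_pow]
  rw [this, PowerSeries.coeff_C_mul, PowerSeries.coeff_mk, zk, ← mul_assoc, ← pow_add]
  congr 2
  omega

lemma coeff_Shat_zword (t : List ℕ) : ∀ (k : ℕ), 1 ≤ k → (∀ j ∈ t, 1 ≤ j) → ∀ n,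
    PowerSeries.coeff (R := H) n (Shat (zword (k :: t)))
      = ∑ e ∈ Finset.Nat.antidiagonalTuple (k :: t).length n, zword (addE (k :: t) e) := by
  induction t with
  | nil =>
      intro k hk _ n
      have h1 : zword [k] = zk k := by simp [zword]
      rw [h1, coeff_Shat_zk k hk]
      have hset : Finset.Nat.antidiagonalTuple [k].length n = {![n]} :=
        Finset.Nat.antidiagonalTuple_one n
      rw [hset, Finset.sum_singleton]
      have h2 : addE [k] ![n] = [k + n] := by
        simp [addE, List.ofFn_succ]
      rw [h2]
      simp [zword]
  | cons k' t' ih =>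
      intro k hk hall n
      have hk' : 1 ≤ k' := hall k' (List.mem_cons_self)
      have hall' : ∀ j ∈ t', 1 ≤ j := fun j hj => hall j (List.mem_cons_of_mem _ hj)
      rw [zword_cons, map_mul, PowerSeries.coeff_mul]
      refine Eq.trans ?_ (sum_antidiagonalTuple_succ (k' :: t').length n
        (fun e => zword (addE (k :: k' :: t') e))).symm
      refine Finset.sum_congr rfl fun p _ => ?_
      rw [coeff_Shat_zk k hk, ih k' hk' hall' p.2, Finset.mul_sum]
      refine Finset.sum_congr rfl fun e _ => ?_
      have h3 : addE (k :: k' :: t') (Fin.cons p.1 e) = (k + p.1) :: addE (k' :: t') e :=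
        addE_cons k (k' :: t') p.1 e
      rw [h3, zword_cons]

/-! ### The span of admissible-type words -/

/-- The set of words of `𝔥` ending in `y`, i.e. the `z`-words. -/
def ZS : Set H := {u | ∃ ks : List ℕ, ks ≠ [] ∧ (∀ k ∈ ks, 1 ≤ k) ∧ u = zword ks}

/-- The subspace `𝔥y` spanned by `z`-words. -/
def P : Submodule ℚ H := Submodule.span ℚ ZS

lemma x_mul_zk (k : ℕ) (hk : 1 ≤ k) : x * zk k = zk (k + 1) := by
  rw [zk, zk, ← mul_assoc, ← pow_succ']
  congr 2
  omega

lemma y_eq_zword : y = zword [1] := by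
  simp [zword, zk]

lemma x_mul_mem (u : H) (hu : u ∈ P) : x * u ∈ P := by
  refine Submodule.span_induction ?_ ?_ ?_ ?_ hu
  · rintro u ⟨ks, hne, hall, rfl⟩
    match ks, hne with
    | k :: t, _ =>
      rw [zword_cons, ← mul_assoc, x_mul_zk k (hall k (List.mem_cons_self)), ← zword_cons]
      exact Submodule.subset_span ⟨(k+1) :: t, by simp, by
        intro j hj
        rcases List.mem_cons.mp hj with h | h
        · omega
        · exact hall j (List.mem_cons_of_mem _ h), rfl⟩
  · simpa using P.zero_mem
  · intro a b _ _ ha hb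
    rw [mul_add]; exact P.add_mem ha hb
  · intro r a _ ha
    rw [mul_smul_comm]; exact P.smul_mem r ha

lemma y_mul_mem (u : H) (hu : u ∈ P) : y * u ∈ P := by
  refine Submodule.span_induction ?_ ?_ ?_ ?_ hu
  · rintro u ⟨ks, hne, hall, rfl⟩
    have : y * zword ks = zword (1 :: ks) := by
      rw [zword_cons, zk]; simp
    rw [this]
    exact Submodule.subset_span ⟨1 :: ks, by simp, by
      intro j hj
      rcases List.mem_cons.mp hj with h | h
      · omega
      · exact hall j h, rfl⟩
  · simpa using P.zero_mem
  · intro a b _ _ ha hb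
    rw [mul_add]; exact P.add_mem ha hb
  · intro r a _ ha
    rw [mul_smul_comm]; exact P.smul_mem r ha

lemma mul_mem_P (a : H) : ∀ u ∈ P, a * u ∈ P := by
  induction a using FreeAlgebra.induction with
  | grade0 r =>
      intro u hu
      rw [← Algebra.smul_def]
      exact P.smul_mem r hu
  | grade1 i =>
      fin_cases i
      · exact fun u hu => x_mul_mem u hu
      · exact fun u hu => y_mul_mem u hu
  | mul a b ha hb =>
      intro u hu
      rw [mul_assoc]
      exact ha _ (hb u hu)
  | add a b ha hb =>
      intro u hu
      rw [add_mul]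
      exact P.add_mem (ha u hu) (hb u hu)

lemma mul_y_mem (v : H) : v * y ∈ P := by
  have h1 : y ∈ P := by
    rw [y_eq_zword]
    exact Submodule.subset_span ⟨[1], by simp, by simp, rfl⟩
  exact mul_mem_P v y h1

/-- The operator identity `(σ_m − τσ_mτ) L_x = L_x (σ_m − α̃σ_mα̃)` on `𝔥y`, which is
the content of the equivalence between the derivation relations and the Ohno type
relations. -/
theorem sigma_operator_identity
    (m : ℕ)
    (tau : H →ₗ[ℚ] H) (htauone : tau 1 = 1)
    (htaumul : ∀ a b : H, tau (a * b) = tau b * tau a)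
    (htaux : tau x = y) (htauy : tau y = x)
    (alphaTilde : H →ₗ[ℚ] H)
    (halphaTilde : ∀ u : H, alphaTilde (u * y) = alphaHom u * y)
    (sigmaM : H →ₗ[ℚ] H)
    (hsigmaM : ∀ ks : List ℕ, ks ≠ [] → (∀ k ∈ ks, 1 ≤ k) →
      sigmaM (zword ks)
        = ∑ e ∈ Finset.Nat.antidiagonalTuple ks.length m, zword (addE ks e))
    (w : H) (v : H) (hw : w = v * y) :
    sigmaM (x * w) - tau (sigmaM (tau (x * w)))
      = x * (sigmaM w - alphaTilde (sigmaM (alphaTilde w))) := by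
  subst hw
  -- `sigmaM` agrees with the coefficients of `Shat` on `𝔥y`
  have hSeq : ∀ u ∈ P, sigmaM u = PowerSeries.coeff (R := H) m (Shat u) := by
    intro u hu
    refine Submodule.span_induction ?_ ?_ ?_ ?_ hu
    · rintro u ⟨ks, hne, hall, rfl⟩
      match ks, hne with
      | k :: t, _ =>
        rw [hsigmaM (k :: t) (by simp) hall,
          coeff_Shat_zword t k (hall k (List.mem_cons_self))
            (fun j hj => hall j (List.mem_cons_of_mem _ hj)) m]
    · simp
    · intro a b _ _ ha hb
      rw [map_add, ha, hb, map_add, map_add]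
    · intro r a _ ha
      have h1 : Shat (r • a) = PowerSeries.C (R := H) (algebraMap ℚ H r) * Shat a := by
        rw [Algebra.smul_def, map_mul, AlgHom.commutes, PowerSeries.algebraMap_apply]
      rw [map_smul, ha, h1, PowerSeries.coeff_C_mul, ← Algebra.smul_def]
  have q1 : v * y ∈ P := mul_y_mem v
  have q2 : x * (v * y) ∈ P := x_mul_mem _ q1
  have q3 : tau (x * (v * y)) = tau (v * y) * y := by
    rw [htaumul, htaux]
  have q4 : tau (v * y) * y ∈ P := mul_y_mem _
  have q5 : alphaHom v * y ∈ P := mul_y_mem _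
  have e1 : sigmaM (x * (v * y)) = x * PowerSeries.coeff (R := H) m (Shat (v * y)) := by
    rw [hSeq _ q2, map_mul, Shat_x, PowerSeries.coeff_C_mul]
  have e2 : tau (sigmaM (tau (x * (v * y)))) = PowerSeries.coeff (R := H) m (Ghat (x * (v * y))) := by
    rw [q3, hSeq _ q4, ← q3]
    exact tau_coeff tau htauone htaumul htaux htauy (x * (v * y)) m
  have e3 : PowerSeries.coeff (R := H) m (Ghat (x * (v * y)))
      = x * PowerSeries.coeff (R := H) m (Bhat v * Yd) * y := by
    have h0 : Ghat (x * (v * y)) = PowerSeries.C (R := H) x * ((Yd * Ghat v) * PowerSeries.C (R := H) y) := by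
      rw [map_mul, map_mul, Ghat_x, Ghat_y, mul_assoc, ← mul_assoc Yd]
    rw [h0, PowerSeries.coeff_C_mul, PowerSeries.coeff_mul_C, Yd_mul_Ghat, ← mul_assoc]
  have e4 : alphaTilde (sigmaM (alphaTilde (v * y)))
      = PowerSeries.coeff (R := H) m (Bhat v * Yd) * y := by
    rw [halphaTilde v, hSeq _ q5]
    have h11 : Shat (alphaHom v * y)
        = Shat (alphaHom v) * PowerSeries.mk (fun j => x ^ j * y) := by
      rw [map_mul, Shat_y]
    have h12 : PowerSeries.coeff (R := H) m (Shat (alphaHom v * y))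
        = (∑ p ∈ Finset.HasAntidiagonal.antidiagonal m,
            PowerSeries.coeff (R := H) p.1 (Shat (alphaHom v)) * x ^ p.2) * y := by
      rw [h11, PowerSeries.coeff_mul, Finset.sum_mul]
      exact Finset.sum_congr rfl fun p _ => by rw [PowerSeries.coeff_mk, mul_assoc]
    rw [h12, halphaTilde]
    congr 1
    rw [map_sum, PowerSeries.coeff_mul]
    refine Finset.sum_congr rfl fun p _ => ?_
    rw [map_mul, map_pow, alphaHom_x, alpha_coeff v p.1,
      show PowerSeries.coeff (R := H) p.2 Yd = y ^ p.2 from PowerSeries.coeff_mk _ _]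
  rw [e1, e2, e3, hSeq _ q1, e4, mul_sub, ← mul_assoc]

end FMZVNote
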